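/- Let G = ℤ_{n₁} × ⋯ × ℤ_{n_d} with all n_i ≥ 2 and n = n₁n₂⋯n_d, and let S be an inverse-closed subset of G∖{(0,…,0)} with ⟨S⟩ = G. Suppose that |S| = p^l is a prime power such that p^l | n but p^{l+1} ∤ n, and suppose further that exactly one of n₁,…,n_d, say n_t, is divisible by p. Then Cay(G, S) admits a total perfect code if and only if s_t ≢ s_t′ (mod p^l) for each pair of distinct elements (s₁,…,s_d), (s₁′,…,s_d′) of S. -/

import Mathlib

/-- The Cayley graph of an additive group `G` with connection set `S`.
(When `S` is inverse-closed and does not contain `0`, `x` and `y` are adjacent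
iff `y - x ∈ S`.) -/
def cayley {G : Type*} [AddGroup G] (S : Set G) : SimpleGraph G :=
  SimpleGraph.fromRel (fun x y => y - x ∈ S)

/-- A perfect code in a graph: an independent set such that every vertex outside it
has exactly one neighbour in it. -/
def IsPerfectCode {V : Type*} (Γ : SimpleGraph V) (C : Set V) : Prop :=
  (∀ x ∈ C, ∀ y ∈ C, ¬ Γ.Adj x y) ∧ ∀ v, v ∉ C → ∃! c, c ∈ C ∧ Γ.Adj v c

/-- A total perfect code in a graph: every vertex has exactly one neighbour in it. -/
def IsTotalPerfectCode {V : Type*} (Γ : SimpleGraph V) (C : Set V) : Prop :=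
  ∀ v, ∃! c, c ∈ C ∧ Γ.Adj v c

/-- The subgroup of periods of a subset `X` of an abelian group:
`{g | X + g = X}`. -/
def periods {G : Type*} [AddCommGroup G] (X : Set G) : AddSubgroup G where
  carrier := {g | ∀ x : G, x + g ∈ X ↔ x ∈ X}
  zero_mem' := by simp
  add_mem' := by
    intro a b ha hb x
    rw [← add_assoc]
    exact (hb _).trans (ha x)
  neg_mem' := by
    intro a ha x
    have := ha (x + -a)
    simpa using this.symm

/-- `(A, B)` is a factorization of the abelian group `G`: every element of `G` can be
uniquely written as `a + b` with `a ∈ A` and `b ∈ B`. -/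
def IsFactorization {G : Type*} [AddCommGroup G] (A B : Set G) : Prop :=
  ∀ g : G, ∃! ab : G × G, ab.1 ∈ A ∧ ab.2 ∈ B ∧ ab.1 + ab.2 = g

/-- An abelian group is good if in every factorization of it into two factors
at least one factor is periodic. -/
def IsGood (G : Type*) [AddCommGroup G] : Prop :=
  ∀ A B : Set G, IsFactorization A B → periods A ≠ ⊥ ∨ periods B ≠ ⊥

open Finset

lemma pow_mod_of_pow_eq_one {x : ℂ} {k : ℕ} (hx : x ^ k = 1) (m : ℕ) :
    x ^ (m % k) = x ^ m := by
  conv_rhs => rw [← Nat.mod_add_div m k]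
  rw [pow_add, pow_mul, hx, one_pow, mul_one]

lemma val_add_pow {k : ℕ} [NeZero k] {x : ℂ} (hxk : x ^ k = 1) (u v : ZMod k) :
    x ^ (u + v).val = x ^ u.val * x ^ v.val := by
  rw [ZMod.val_add, pow_mod_of_pow_eq_one hxk, pow_add]

lemma geom_sum_eq_zero' {x : ℂ} {k : ℕ} (hx : x ^ k = 1) (hx1 : x ≠ 1) :
    ∑ a ∈ Finset.range k, x ^ a = 0 := by
  have h := geom_sum_mul x k
  rw [hx, sub_self] at h
  exact (mul_eq_zero.mp h).resolve_right (sub_ne_zero.mpr hx1)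

lemma prime_dvd_card_of_sum_eq_zero {α : Type*} {p j : ℕ} (hp : p.Prime) (hj : 1 ≤ j)
    {x : ℂ} (hx : IsPrimitiveRoot x (p ^ j)) {F : Finset α} {e : α → ℕ}
    (h : ∑ c ∈ F, x ^ e c = 0) : (p : ℕ) ∣ F.card := by
  haveI : Fact p.Prime := ⟨hp⟩
  have hpos : 0 < p ^ j := pow_pos hp.pos j
  set P : Polynomial ℤ := ∑ c ∈ F, Polynomial.X ^ e c with hP
  have haev : Polynomial.aeval x P = 0 := by
    rw [hP, map_sum]
    simpa using h
  have hdvd : minpoly ℤ x ∣ P := minpoly.isIntegrallyClosed_dvd (hx.isIntegral hpos) haev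
  rw [← Polynomial.cyclotomic_eq_minpoly hx hpos] at hdvd
  obtain ⟨Q, hQ⟩ := hdvd
  obtain ⟨j', rfl⟩ : ∃ j', j = j' + 1 := ⟨j - 1, (Nat.succ_pred_eq_of_pos hj).symm⟩
  have h1 : P.eval 1 = (F.card : ℤ) := by
    rw [hP, Polynomial.eval_finset_sum]
    simp
  have := congrArg (Polynomial.eval (1 : ℤ)) hQ
  rw [Polynomial.eval_mul, Polynomial.eval_one_cyclotomic_prime_pow, h1] at this
  exact_mod_cast Int.natCast_dvd_natCast.mp ⟨Q.eval 1, this⟩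



/-- Theorem 4.11: let `G = ℤ_{n₁} × ⋯ × ℤ_{n_d}` of order `n = n₁⋯n_d` and `S` an
inverse-closed generating subset of `G ∖ {0}` with `|S| = p^l` a prime power such
that `p^l ∣ n` but `p^{l+1} ∤ n`, and suppose exactly one of `n₁, …, n_d`, say
`n_t`, is divisible by `p`. Then `Cay(G, S)` admits a total perfect code iff
`s_t ≢ s'_t (mod p^l)` for all distinct `s, s' ∈ S`. -/
theorem totalPerfectCode_iff_mod_p_pow (d : ℕ) (hd : 1 ≤ d) (n : Fin d → ℕ)
    (hn : ∀ i, 2 ≤ n i) [∀ i, NeZero (n i)]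
    (S : Finset (∀ i, ZMod (n i))) (h0 : (0 : ∀ i, ZMod (n i)) ∉ S)
    (hinv : ∀ s ∈ S, -s ∈ S)
    (hgen : AddSubgroup.closure (S : Set (∀ i, ZMod (n i))) = ⊤)
    (p l : ℕ) (hp : p.Prime) (hl : 1 ≤ l)
    (hcard : S.card = p ^ l)
    (hdvd : p ^ l ∣ ∏ i, n i) (hndvd : ¬ p ^ (l + 1) ∣ ∏ i, n i)
    (t : Fin d) (ht : p ∣ n t) (huniq : ∀ i, p ∣ n i → i = t) :
    (∃ C : Set (∀ i, ZMod (n i)),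
        IsTotalPerfectCode (cayley (S : Set (∀ i, ZMod (n i)))) C) ↔
      ∀ s ∈ S, ∀ s' ∈ S, s ≠ s' → ¬ ((s t).val ≡ (s' t).val [MOD p ^ l]) := by
    classical
  set k := p ^ l with hkdef
  have hk2 : 2 ≤ k := le_trans hp.two_le (Nat.le_self_pow (by omega) p)
  haveI : NeZero k := ⟨by omega⟩
  haveI : Fact (1 < k) := ⟨by omega⟩
  haveI : Fact (1 < n t) := ⟨hn t⟩
  -- p ^ l divides n t
  have hkt : k ∣ n t := by
    have hM : ¬ p ∣ ∏ i ∈ Finset.univ.erase t, n i := by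
      intro hdvdM
      obtain ⟨i, hi, hpi⟩ := (hp.prime.dvd_finset_prod_iff _).mp hdvdM
      exact (Finset.mem_erase.mp hi).1 (huniq i hpi)
    have hcop : Nat.Coprime k (∏ i ∈ Finset.univ.erase t, n i) :=
      Nat.Coprime.pow_left _ ((hp.coprime_iff_not_dvd).mpr hM)
    have : k ∣ n t * ∏ i ∈ Finset.univ.erase t, n i := by
      rw [Finset.mul_prod_erase _ _ (Finset.mem_univ t)]
      exact hdvd
    exact hcop.dvd_of_dvd_mul_right this
  -- the key homomorphism-like map ψ
  set ψ : (∀ i, ZMod (n i)) → ZMod k := fun g => (((g t).val : ℕ) : ZMod k) with hψdef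
  have ψadd : ∀ g h : (∀ i, ZMod (n i)), ψ (g + h) = ψ g + ψ h := by
    intro g h
    show ((((g + h) t).val : ℕ) : ZMod k) = _
    have : (g + h) t = g t + h t := rfl
    rw [this, ZMod.val_add]
    have hmod : ((g t).val + (h t).val) % n t ≡ (g t).val + (h t).val [MOD k] :=
      Nat.ModEq.of_dvd hkt (Nat.mod_modEq _ _)
    rw [(ZMod.natCast_eq_natCast_iff _ _ _).mpr hmod]
    push_cast
    rfl
  have hψeq : ∀ s s' : (∀ i, ZMod (n i)), ((s t).val ≡ (s' t).val [MOD k]) ↔ ψ s = ψ s' := by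
    intro s s'
    simp only [hψdef]
    exact (ZMod.natCast_eq_natCast_iff _ _ _).symm
  -- adjacency in the Cayley graph
  have hadj : ∀ v c : (∀ i, ZMod (n i)), (cayley (S : Set (∀ i, ZMod (n i)))).Adj v c ↔ c - v ∈ S := by
    intro v c
    constructor
    · rintro ⟨hne, h | h⟩
      · exact h
      · have := hinv _ h
        rwa [neg_sub] at this
    · intro h
      refine ⟨fun hvc => ?_, Or.inl h⟩
      rw [hvc, sub_self] at h
      exact h0 h
  constructor
  · -- hard direction
    rintro ⟨C, hC⟩ s hs s' hs' hne hmod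
    set C' : Finset (∀ i, ZMod (n i)) := Finset.univ.filter (· ∈ C) with hC'def
    have hmemC' : ∀ g : (∀ i, ZMod (n i)), g ∈ C' ↔ g ∈ C := by
      intro g; simp [hC'def]
    -- factorization
    have hfact : ∀ g : (∀ i, ZMod (n i)), ∃! sc : (∀ i, ZMod (n i)) × (∀ i, ZMod (n i)), sc.1 ∈ S ∧ sc.2 ∈ C' ∧ sc.1 + sc.2 = g := by
      intro g
      obtain ⟨c, ⟨hcC, hcadj⟩, hcu⟩ := hC g
      have hcg : c - g ∈ S := (hadj g c).mp hcadj
      refine ⟨(g - c, c), ⟨?_, (hmemC' c).mpr hcC, sub_add_cancel g c⟩, ?_⟩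
      · have := hinv _ hcg
        rwa [neg_sub] at this
      · rintro ⟨s₁, c₁⟩ ⟨h1, h2, h3⟩
        have hc₁ : c₁ - g ∈ S := by
          have : c₁ - g = -s₁ := by rw [← h3]; abel
          rw [this]
          exact hinv _ h1
        have hceq : c₁ = c := hcu c₁ ⟨(hmemC' c₁).mp h2, (hadj g c₁).mpr hc₁⟩
        have hseq : s₁ = g - c := by rw [← hceq, ← h3]; abel
        simp [hceq, hseq]
    -- sum reindexing
    have hsum : ∀ F : (∀ i, ZMod (n i)) → ℂ, ∑ sc ∈ S ×ˢ C', F (sc.1 + sc.2) = ∑ g : (∀ i, ZMod (n i)), F g := by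
      intro F
      refine Finset.sum_bij (fun sc _ => sc.1 + sc.2) (fun _ _ => Finset.mem_univ _)
        ?_ ?_ (fun _ _ => rfl)
      · intro a₁ ha₁ a₂ ha₂ heq
        obtain ⟨ha₁S, ha₁C⟩ := Finset.mem_product.mp ha₁
        obtain ⟨ha₂S, ha₂C⟩ := Finset.mem_product.mp ha₂
        obtain ⟨sc, _, hu⟩ := hfact (a₁.1 + a₁.2)
        rw [hu a₁ ⟨ha₁S, ha₁C, rfl⟩, hu a₂ ⟨ha₂S, ha₂C, heq.symm⟩]
      · intro g _
        obtain ⟨sc, ⟨h1, h2, h3⟩, _⟩ := hfact g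
        exact ⟨sc, Finset.mem_product.mpr ⟨h1, h2⟩, h3⟩
    -- cardinality
    have hcardG : Fintype.card (∀ i, ZMod (n i)) = ∏ i, n i := by
      rw [Fintype.card_pi]
      congr 1
      ext i
      exact ZMod.card (n i)
    have hcardmul : k * C'.card = ∏ i, n i := by
      have := hsum (fun _ => (1 : ℂ))
      rw [Finset.sum_const, Finset.sum_const, Finset.card_product, Finset.card_univ,
        hcard, hcardG] at this
      have h2 : ((k * C'.card : ℕ) : ℂ) = ((∏ i, n i : ℕ) : ℂ) := by
        push_cast
        simpa using this
      exact_mod_cast h2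
    have hpC : ¬ p ∣ C'.card := by
      intro hdvdC
      obtain ⟨m, hm⟩ := hdvdC
      apply hndvd
      rw [← hcardmul, hm, hkdef]
      ring_nf
      exact ⟨m, by ring⟩
    -- the character sums
    set ζ : ℂ := Complex.exp (2 * Real.pi * Complex.I / k) with hζdef
    have hζ : IsPrimitiveRoot ζ k := Complex.isPrimitiveRoot_exp k (by omega)
    have hvan : ∀ a : ℕ, 0 < a → a < k → ∑ s'' ∈ S, (ζ ^ a) ^ (ψ s'').val = 0 := by
      intro a ha hak
      set x := ζ ^ a with hxdef
      have hxk : x ^ k = 1 := by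
        rw [hxdef, ← pow_mul, mul_comm, pow_mul, hζ.pow_eq_one, one_pow]
      have hx1 : x ≠ 1 := hζ.pow_ne_one_of_pos_of_lt ha.ne' hak
      set χ : (∀ i, ZMod (n i)) → ℂ := fun g => x ^ (ψ g).val with hχdef
      have hχ : ∀ g h : (∀ i, ZMod (n i)), χ (g + h) = χ g * χ h := by
        intro g h
        rw [hχdef]
        simp only
        rw [ψadd, val_add_pow hxk]
      have hGsum : ∑ g : (∀ i, ZMod (n i)), χ g = 0 := by
        set g₀ : (∀ i, ZMod (n i)) := Pi.single t 1 with hg₀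
        have hψg₀ : ψ g₀ = 1 := by
          rw [hψdef]
          simp only [hg₀, Pi.single_eq_same]
          rw [ZMod.val_one]
          exact Nat.cast_one
        have hχg₀ : χ g₀ ≠ 1 := by
          rw [hχdef]
          simp only [hψg₀, ZMod.val_one, pow_one]
          exact hx1
        have htrans : (∑ g : (∀ i, ZMod (n i)), χ g) * χ g₀ = ∑ g : (∀ i, ZMod (n i)), χ g := by
          rw [Finset.sum_mul]
          calc ∑ g : (∀ i, ZMod (n i)), χ g * χ g₀ = ∑ g : (∀ i, ZMod (n i)), χ (g + g₀) := by
                refine Finset.sum_congr rfl fun g _ => ?_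
                rw [hχ]
            _ = ∑ g : (∀ i, ZMod (n i)), χ g := Fintype.sum_equiv (Equiv.addRight g₀) _ _ (fun g => rfl)
        have : (∑ g : (∀ i, ZMod (n i)), χ g) * (χ g₀ - 1) = 0 := by
          rw [mul_sub, htrans, mul_one, sub_self]
        exact (mul_eq_zero.mp this).resolve_right (sub_ne_zero.mpr hχg₀)
      have hfacz : (∑ s'' ∈ S, χ s'') * (∑ c ∈ C', χ c) = 0 := by
        rw [Finset.sum_mul_sum, ← Finset.sum_product']
        calc ∑ sc ∈ S ×ˢ C', χ sc.1 * χ sc.2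
            = ∑ sc ∈ S ×ˢ C', χ (sc.1 + sc.2) := by
              refine Finset.sum_congr rfl fun sc _ => (hχ _ _).symm
          _ = ∑ g : (∀ i, ZMod (n i)), χ g := hsum χ
          _ = 0 := hGsum
      have hC'ne : (∑ c ∈ C', χ c) ≠ 0 := by
        intro h0'
        have hd : orderOf x ∣ k := orderOf_dvd_of_pow_eq_one hxk
        obtain ⟨j, hjl, hxj⟩ := (Nat.dvd_prime_pow hp).mp (hkdef ▸ hd)
        have hj1 : 1 ≤ j := by
          rcases Nat.eq_zero_or_pos j with h | h
          · exfalso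
            rw [h, pow_zero] at hxj
            exact hx1 (orderOf_eq_one_iff.mp hxj)
          · exact h
        have hxprim : IsPrimitiveRoot x (p ^ j) := hxj ▸ IsPrimitiveRoot.orderOf x
        exact hpC (prime_dvd_card_of_sum_eq_zero hp hj1 hxprim h0')
      exact (mul_eq_zero.mp hfacz).resolve_right hC'ne
    -- final counting
    have hψss' : ψ s = ψ s' := (hψeq s s').mp hmod
    set r₀ := ψ s with hr₀
    set N := (S.filter (fun s'' => ψ s'' = r₀)).card with hN
    have hN2 : 1 < N := by
      rw [hN]
      refine Finset.one_lt_card.mpr ⟨s, ?_, s', ?_, hne⟩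
      · exact Finset.mem_filter.mpr ⟨hs, rfl⟩
      · exact Finset.mem_filter.mpr ⟨hs', hψss'.symm⟩
    have hT1 : ∑ s'' ∈ S, ∑ a ∈ Finset.range k, (ζ ^ (ψ s'' - r₀).val) ^ a
        = (N : ℂ) * k := by
      have hterm : ∀ s'' ∈ S, ∑ a ∈ Finset.range k, (ζ ^ (ψ s'' - r₀).val) ^ a
          = if ψ s'' = r₀ then (k : ℂ) else 0 := by
        intro s'' _
        by_cases h : ψ s'' = r₀
        · rw [if_pos h]
          have hz : (ψ s'' - r₀).val = 0 := by rw [h, sub_self, ZMod.val_zero]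
          rw [hz]
          simp
        · rw [if_neg h]
          have hm0 : 0 < (ψ s'' - r₀).val := by
            rcases Nat.eq_zero_or_pos (ψ s'' - r₀).val with h' | h'
            · exact absurd (sub_eq_zero.mp ((ZMod.val_eq_zero _).mp h')) h
            · exact h'
          have hmk : (ψ s'' - r₀).val < k := ZMod.val_lt _
          have hy1 : ζ ^ (ψ s'' - r₀).val ≠ 1 := hζ.pow_ne_one_of_pos_of_lt hm0.ne' hmk
          have hyk : (ζ ^ (ψ s'' - r₀).val) ^ k = 1 := by
            rw [← pow_mul, mul_comm, pow_mul, hζ.pow_eq_one, one_pow]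
          exact geom_sum_eq_zero' hyk hy1
      rw [Finset.sum_congr rfl hterm, ← Finset.sum_filter, Finset.sum_const, nsmul_eq_mul]
    have hT2 : ∑ a ∈ Finset.range k, ∑ s'' ∈ S, (ζ ^ (ψ s'' - r₀).val) ^ a = (k : ℂ) := by
      have hterm : ∀ a ∈ Finset.range k, ∑ s'' ∈ S, (ζ ^ (ψ s'' - r₀).val) ^ a
          = if a = 0 then (k : ℂ) else 0 := by
        intro a ha
        rw [Finset.mem_range] at ha
        by_cases h : a = 0
        · rw [if_pos h, h]
          simp [hcard]
        · rw [if_neg h]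
          have hxk : (ζ ^ a) ^ k = 1 := by
            rw [← pow_mul, mul_comm, pow_mul, hζ.pow_eq_one, one_pow]
          calc ∑ s'' ∈ S, (ζ ^ (ψ s'' - r₀).val) ^ a
              = ∑ s'' ∈ S, (ζ ^ a) ^ (ψ s'' + (-r₀)).val := by
                refine Finset.sum_congr rfl fun s'' _ => ?_
                rw [← pow_mul, ← pow_mul, mul_comm a, sub_eq_add_neg]
            _ = ∑ s'' ∈ S, (ζ ^ a) ^ (ψ s'').val * (ζ ^ a) ^ (-r₀).val :=
                Finset.sum_congr rfl fun s'' _ => val_add_pow hxk _ _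
            _ = (∑ s'' ∈ S, (ζ ^ a) ^ (ψ s'').val) * (ζ ^ a) ^ (-r₀).val :=
                (Finset.sum_mul _ _ _).symm
            _ = 0 := by rw [hvan a (Nat.pos_of_ne_zero h) ha, zero_mul]
      rw [Finset.sum_congr rfl hterm,
        Finset.sum_ite_eq' (Finset.range k) 0 (fun _ => (k : ℂ)),
        if_pos (Finset.mem_range.mpr (by omega))]
    have hNk : (N : ℂ) * k = (k : ℂ) := by rw [← hT1, Finset.sum_comm, hT2]
    have hkne : (k : ℂ) ≠ 0 := Nat.cast_ne_zero.mpr (by omega)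
    have hN1 : (N : ℂ) = 1 := mul_right_cancel₀ hkne (by rw [hNk, one_mul])
    have : N = 1 := by exact_mod_cast hN1
    omega
  · -- easy direction
    intro hdist
    have hinj : ∀ s ∈ S, ∀ s' ∈ S, ψ s = ψ s' → s = s' := by
      intro s hs s' hs' h
      by_contra hne
      exact hdist s hs s' hs' hne ((hψeq s s').mpr h)
    have himg : S.image ψ = Finset.univ := by
      apply Finset.eq_univ_of_card
      rw [Finset.card_image_of_injOn (fun a ha b hb => hinj a ha b hb), hcard]
      exact (ZMod.card k).symm
    have hexu : ∀ r : ZMod k, ∃! s, s ∈ S ∧ ψ s = r := by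
      intro r
      have : r ∈ S.image ψ := himg ▸ Finset.mem_univ r
      obtain ⟨s, hsS, hψs⟩ := Finset.mem_image.mp this
      exact ⟨s, ⟨hsS, hψs⟩, fun s' ⟨hs', h'⟩ => hinj s' hs' s hsS (h'.trans hψs.symm)⟩
    refine ⟨{g : (∀ i, ZMod (n i)) | ψ g = 0}, ?_⟩
    intro v
    obtain ⟨s, ⟨hsS, hψs⟩, hu⟩ := hexu (-ψ v)
    refine ⟨v + s, ⟨?_, ?_⟩, ?_⟩
    · show ψ (v + s) = 0
      rw [ψadd, hψs, add_neg_cancel]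
    · rw [hadj]
      simpa using hsS
    · rintro c ⟨hcC, hcadj⟩
      have hcs : c - v ∈ S := (hadj v c).mp hcadj
      have hψc : ψ c = 0 := hcC
      have hsplit : ψ (c - v) + ψ v = 0 := by
        rw [← ψadd, sub_add_cancel, hψc]
      have : ψ (c - v) = -ψ v := eq_neg_of_add_eq_zero_left hsplit
      have := hu (c - v) ⟨hcs, this⟩
      rw [sub_eq_iff_eq_add] at this
      rw [this]
      abel
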